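/- In the near-field plane Ω of order 9, the 10-point set O₁ = {(-1,i), (0,1), (1,0), (-i,-j), (i,j), (-j,-1), (j,k), (-k,-i), (0,1,0), (1,0,0)} (where the last two are the ideal points with ideal coordinates (0,1,0) and (1,0,0)) is an oval: no three of its points are collinear. -/
import Mathlib


/-- The miniquaternion multiplication on a field of 9 elements: `x ⊙ y = x·y` if `y` is
a square, and `x ⊙ y = x³·y` otherwise (Dickson's construction). -/
noncomputable def nmul {K : Type*} [Field K] (x y : K) : K :=
  letI := Classical.propDecidable (IsSquare y)
  if IsSquare y then x * y else x ^ 3 * y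

/-- Points of the near-field plane `Ω` of order 9: 81 proper points `(x,y)`, 9 ideal
points `(1,μ,0)` (one for each slope `μ`), and the ideal point `(0,1,0)`. -/
inductive Pt (K : Type*) where
  | prop : K → K → Pt K
  | ideal : K → Pt K
  | inf : Pt K
deriving DecidableEq

/-- Lines of the near-field plane `Ω`: 81 proper lines `y = x⊙μ + ν`, 9 vertical lines
`x = λ`, and the ideal line. -/
inductive Ln (K : Type*) where
  | prop : K → K → Ln K
  | vert : K → Ln K
  | inf : Ln K
deriving DecidableEq

/-- Incidence in the plane `Ω`: `(x,y)` lies on `y = x⊙μ + ν` and on `x = λ` (if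
`x = λ`); the ideal point of slope `μ` lies on all lines of slope `μ` and on the ideal
line; `(0,1,0)` lies on all vertical lines and on the ideal line. -/
noncomputable def Incid {K : Type*} [Field K] : Pt K → Ln K → Prop
  | .prop x y, .prop μ ν => y = nmul x μ + ν
  | .prop x _, .vert l => x = l
  | .prop _ _, .inf => False
  | .ideal m, .prop μ _ => m = μ
  | .ideal _, .vert _ => False
  | .ideal _, .inf => True
  | .inf, .prop _ _ => False
  | .inf, .vert _ => True
  | .inf, .inf => True


/-- Concrete model of GF(9): pairs `(a,b)` over `ZMod 3` representing `a + b·i`. -/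
abbrev F9 := ZMod 3 × ZMod 3

/-- Gaussian-integer style multiplication on `F9`. -/
def fmul (u v : F9) : F9 := (u.1 * v.1 - u.2 * v.2, u.1 * v.2 + u.2 * v.1)

/-- Concrete version of `nmul` on `F9` (squares are exactly the pairs with a zero coord). -/
def fnmul (x y : F9) : F9 :=
  if y.1 = 0 ∨ y.2 = 0 then fmul x y else fmul (fmul (fmul x x) x) y

private lemma F9_anisotropic : ∀ w : F9, w.1 * w.1 + w.2 * w.2 = 0 → w.1 = 0 ∧ w.2 = 0 := by
  decide

private lemma F9_sq_fst_or_snd : ∀ w : F9, (fmul w w).1 = 0 ∨ (fmul w w).2 = 0 := by decide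

private lemma F9_sq_surj : ∀ y : F9, y.1 = 0 ∨ y.2 = 0 → ∃ u : F9, y = fmul u u := by decide

/-- Boolean incidence on the concrete model. -/
def incidB : Pt F9 → Ln F9 → Bool
  | .prop x y, .prop μ ν => decide (y = fnmul x μ + ν)
  | .prop x _, .vert l => decide (x = l)
  | .prop _ _, .inf => false
  | .ideal m, .prop μ _ => decide (m = μ)
  | .ideal _, .vert _ => false
  | .ideal _, .inf => true
  | .inf, .prop _ _ => false
  | .inf, .vert _ => true
  | .inf, .inf => true

def lnEquiv : (F9 × F9) ⊕ F9 ⊕ Unit ≃ Ln F9 where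
  toFun := fun x => match x with
    | .inl (μ, ν) => .prop μ ν
    | .inr (.inl l) => .vert l
    | .inr (.inr _) => .inf
  invFun := fun L => match L with
    | .prop μ ν => .inl (μ, ν)
    | .vert l => .inr (.inl l)
    | .inf => .inr (.inr ())
  left_inv := by rintro (⟨μ, ν⟩ | l | ⟨⟩) <;> rfl
  right_inv := by rintro (_ | _ | _) <;> rfl

instance : Fintype (Ln F9) := Fintype.ofEquiv _ lnEquiv

section Transfer

variable {K : Type*} [Field K] [CharP K 3] [Fintype K]

/-- The embedding of the concrete model into `K`. -/
noncomputable def phi (i : K) : F9 → K :=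
  fun u => ZMod.castHom (dvd_refl 3) K u.1 + ZMod.castHom (dvd_refl 3) K u.2 * i

lemma phi_eq_zero (i : K) (hi : i * i = -1) (u : F9) (h : phi i u = 0) : u = 0 := by
  haveI : Fact (Nat.Prime 3) := ⟨by norm_num⟩
  set e := ZMod.castHom (dvd_refl 3) K with he
  have hinj : Function.Injective e := e.injective
  have h2 : e (u.1 * u.1 + u.2 * u.2) = 0 := by
    have hu : e u.1 + e u.2 * i = 0 := h
    rw [map_add, map_mul, map_mul]
    linear_combination (e u.1 - e u.2 * i) * hu + (e u.2 * e u.2) * hi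
  have h3 : u.1 * u.1 + u.2 * u.2 = 0 := by
    apply hinj; rw [h2, map_zero]
  exact Prod.ext (F9_anisotropic u h3).1 (F9_anisotropic u h3).2

lemma phi_sub (i : K) (u v : F9) : phi i (u - v) = phi i u - phi i v := by
  simp only [phi, Prod.fst_sub, Prod.snd_sub, map_sub]; ring

lemma phi_add (i : K) (u v : F9) : phi i (u + v) = phi i u + phi i v := by
  simp only [phi, Prod.fst_add, Prod.snd_add, map_add]; ring

lemma phi_injective (i : K) (hi : i * i = -1) : Function.Injective (phi i) := by
  intro u v h
  have hs : phi i (u - v) = 0 := by rw [phi_sub, h, sub_self]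
  have := phi_eq_zero i hi (u - v) hs
  exact sub_eq_zero.mp (by simpa [sub_eq_zero] using this)

lemma phi_bijective (hK : Fintype.card K = 9) (i : K) (hi : i * i = -1) :
    Function.Bijective (phi i) := by
  rw [Fintype.bijective_iff_injective_and_card]
  refine ⟨phi_injective i hi, ?_⟩
  simp [hK]

lemma phi_mul (i : K) (hi : i * i = -1) (u v : F9) :
    phi i (fmul u v) = phi i u * phi i v := by
  simp only [phi, fmul, map_add, map_sub, map_mul]
  linear_combination (-(ZMod.castHom (dvd_refl 3) K u.2 * ZMod.castHom (dvd_refl 3) K v.2)) * hi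

lemma phi_isSquare (hK : Fintype.card K = 9) (i : K) (hi : i * i = -1) (y : F9) :
    IsSquare (phi i y) ↔ (y.1 = 0 ∨ y.2 = 0) := by
  have hbij := phi_bijective hK i hi
  constructor
  · rintro ⟨r, hr⟩
    obtain ⟨u, rfl⟩ := hbij.surjective r
    rw [← phi_mul i hi] at hr
    rw [hbij.injective hr]
    exact F9_sq_fst_or_snd u
  · intro h
    obtain ⟨u, rfl⟩ := F9_sq_surj y h
    exact ⟨phi i u, phi_mul i hi u u⟩

lemma phi_nmul (hK : Fintype.card K = 9) (i : K) (hi : i * i = -1) (x y : F9) :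
    nmul (phi i x) (phi i y) = phi i (fnmul x y) := by
  by_cases h : y.1 = 0 ∨ y.2 = 0
  · have hs : IsSquare (phi i y) := (phi_isSquare hK i hi y).mpr h
    simp only [nmul, if_pos hs, fnmul, if_pos h, phi_mul i hi]
  · have hs : ¬ IsSquare (phi i y) := fun hc => h ((phi_isSquare hK i hi y).mp hc)
    simp only [nmul, if_neg hs, fnmul, if_neg h]
    rw [phi_mul i hi, phi_mul i hi, phi_mul i hi]
    ring

/-- Map of points. -/
noncomputable def pmap (i : K) : Pt F9 → Pt K
  | .prop x y => .prop (phi i x) (phi i y)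
  | .ideal m => .ideal (phi i m)
  | .inf => .inf

/-- Map of lines. -/
noncomputable def lmap (i : K) : Ln F9 → Ln K
  | .prop μ ν => .prop (phi i μ) (phi i ν)
  | .vert l => .vert (phi i l)
  | .inf => .inf

lemma lmap_surjective (hK : Fintype.card K = 9) (i : K) (hi : i * i = -1) :
    Function.Surjective (lmap (K := K) i) := by
  have hs := (phi_bijective hK i hi).surjective
  rintro (⟨μ, ν⟩ | l | _)
  · obtain ⟨μ', rfl⟩ := hs μ; obtain ⟨ν', rfl⟩ := hs ν; exact ⟨.prop μ' ν', rfl⟩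
  · obtain ⟨l', rfl⟩ := hs l; exact ⟨.vert l', rfl⟩
  · exact ⟨.inf, rfl⟩

lemma pmap_injective (i : K) (hi : i * i = -1) : Function.Injective (pmap (K := K) i) := by
  have hinj := phi_injective i hi
  rintro (⟨x, y⟩ | m | _) (⟨x', y'⟩ | m' | _) h <;> simp only [pmap] at h <;> try cases h
  · obtain ⟨h1, h2⟩ := Pt.prop.inj h
    rw [hinj h1, hinj h2]
  · rw [hinj (Pt.ideal.inj h)]
  · rfl

lemma incid_iff (hK : Fintype.card K = 9) (i : K) (hi : i * i = -1) (p : Pt F9) (L : Ln F9) :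
    Incid (pmap i p) (lmap i L) ↔ incidB p L = true := by
  have hinj := phi_injective i hi
  rcases p with ⟨x, y⟩ | m | _ <;> rcases L with ⟨μ, ν⟩ | l | _ <;>
      simp only [pmap, lmap, Incid, incidB, decide_eq_true_eq] <;>
    try first
      | exact iff_of_false not_false (by simp)
      | exact iff_of_true trivial rfl
  · rw [phi_nmul hK i hi, ← phi_add i]
    exact hinj.eq_iff
  · exact hinj.eq_iff
  · exact hinj.eq_iff

end Transfer

/-- The concrete coordinates of the ten points of the oval, in the model `F9`. -/
def pts9 : Fin 10 → Pt F9 :=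
  ![.prop (2,0) (0,1), .prop (0,0) (1,0), .prop (1,0) (0,0), .prop (0,2) (2,2),
    .prop (0,1) (1,1), .prop (2,2) (2,0), .prop (1,1) (1,2), .prop (2,1) (0,2),
    .inf, .ideal (0,0)]

private lemma pts9_injective : Function.Injective pts9 := by decide

set_option maxHeartbeats 4000000 in
set_option maxRecDepth 100000 in
set_option synthInstance.maxSize 2000 in
set_option synthInstance.maxHeartbeats 1000000 in
private lemma no_three_collinear : ∀ a b c : Fin 10, a ≠ b → b ≠ c → a ≠ c →
    ∀ L : Ln F9, ¬(incidB (pts9 a) L = true ∧ incidB (pts9 b) L = true ∧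
      incidB (pts9 c) L = true) := by decide

section Main

variable {K : Type*} [Field K] [CharP K 3]

private lemma pmap_prop (i : K) (u v : F9) :
    pmap i (Pt.prop u v) = Pt.prop (phi i u) (phi i v) := rfl

private lemma pmap_ideal (i : K) (m : F9) : pmap i (Pt.ideal m) = Pt.ideal (phi i m) := rfl

private lemma phi_mk (i : K) (a b : ZMod 3) :
    phi i (a, b) = ZMod.castHom (dvd_refl 3) K a + ZMod.castHom (dvd_refl 3) K b * i := rfl

end Main

/-- In the near-field plane `Ω` of order 9, the 10-point set
`O₁ = {(-1,i), (0,1), (1,0), (-i,-j), (i,j), (-j,-1), (j,k), (-k,-i), (0,1,0), (1,0,0)}`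
is an oval: the points are distinct and no three of them are collinear. -/
theorem omega_oval (K : Type*) [Field K] [Fintype K] (hK : Fintype.card K = 9)
    (i : K) (hi : i * i = -1) (j k : K) (hj : j = 1 + i) (hk : k = 1 - i) :
    let pts : Fin 10 → Pt K :=
      ![.prop (-1) i, .prop 0 1, .prop 1 0, .prop (-i) (-j), .prop i j,
        .prop (-j) (-1), .prop j k, .prop (-k) (-i), .inf, .ideal 0]
    Function.Injective pts ∧
      ∀ a b c : Fin 10, a ≠ b → b ≠ c → a ≠ c →
        ¬ ∃ L : Ln K, Incid (pts a) L ∧ Incid (pts b) L ∧ Incid (pts c) L := by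
  intro pts
  haveI : Fact (Nat.Prime 3) := ⟨by norm_num⟩
  haveI hC : CharP K 3 := by
    haveI := ringChar.charP K
    obtain ⟨n, hp, hcard⟩ := FiniteField.card K (ringChar K)
    have hdvd : ringChar K ∣ 9 := by
      rw [hK] at hcard
      rw [hcard]
      exact dvd_pow_self _ n.ne_zero
    have h3 : ringChar K ∣ 3 :=
      hp.dvd_of_dvd_pow (show ringChar K ∣ 3 ^ 2 by norm_num; exact hdvd)
    exact CharP.congr (ringChar K) ((Nat.prime_dvd_prime_iff_eq hp (by norm_num)).mp h3)
  have h0 : (ZMod.castHom (dvd_refl 3) K) 0 = 0 := map_zero _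
  have h1 : (ZMod.castHom (dvd_refl 3) K) 1 = 1 := map_one _
  have h2neg : (2 : ZMod 3) = -1 := rfl
  have h2 : (ZMod.castHom (dvd_refl 3) K) 2 = -1 := by rw [h2neg, map_neg, map_one]
  have hpts : ∀ t, pts t = pmap i (pts9 t) := by
    intro t
    fin_cases t
    · show Pt.prop (-1) i = pmap i (Pt.prop (2,0) (0,1))
      rw [pmap_prop, phi_mk, phi_mk, h0, h1, h2]
      congr 1 <;> ring
    · show Pt.prop 0 1 = pmap i (Pt.prop (0,0) (1,0))
      rw [pmap_prop, phi_mk, phi_mk, h0, h1]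
      congr 1 <;> ring
    · show Pt.prop 1 0 = pmap i (Pt.prop (1,0) (0,0))
      rw [pmap_prop, phi_mk, phi_mk, h0, h1]
      congr 1 <;> ring
    · show Pt.prop (-i) (-j) = pmap i (Pt.prop (0,2) (2,2))
      rw [pmap_prop, phi_mk, phi_mk, h0, h2, hj]
      congr 1 <;> ring
    · show Pt.prop i j = pmap i (Pt.prop (0,1) (1,1))
      rw [pmap_prop, phi_mk, phi_mk, h0, h1, hj]
      congr 1 <;> ring
    · show Pt.prop (-j) (-1) = pmap i (Pt.prop (2,2) (2,0))
      rw [pmap_prop, phi_mk, phi_mk, h0, h2, hj]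
      congr 1 <;> ring
    · show Pt.prop j k = pmap i (Pt.prop (1,1) (1,2))
      rw [pmap_prop, phi_mk, phi_mk, h1, h2, hj, hk]
      congr 1 <;> ring
    · show Pt.prop (-k) (-i) = pmap i (Pt.prop (2,1) (0,2))
      rw [pmap_prop, phi_mk, phi_mk, h0, h1, h2, hk]
      congr 1 <;> ring
    · show Pt.inf = pmap i Pt.inf
      rfl
    · show Pt.ideal 0 = pmap i (Pt.ideal (0,0))
      rw [pmap_ideal, phi_mk, h0]
      congr 1
      ring
  constructor
  · have hfun : pts = pmap i ∘ pts9 := funext hpts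
    rw [hfun]
    exact (pmap_injective i hi).comp pts9_injective
  · intro a b c hab hbc hac
    rintro ⟨L, hL1, hL2, hL3⟩
    obtain ⟨L', rfl⟩ := lmap_surjective hK i hi L
    rw [hpts a, incid_iff hK i hi] at hL1
    rw [hpts b, incid_iff hK i hi] at hL2
    rw [hpts c, incid_iff hK i hi] at hL3
    exact no_three_collinear a b c hab hbc hac L' ⟨hL1, hL2, hL3⟩
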